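/- arXiv:2302.12543 — 2 statements merged into one kernel-verified Lean document; each statement's English description precedes it below -/
import Mathlib

section
/- Let d ≥ 2, 0 ≤ p ≤ d, with ε_i = 1 for i ≤ p and ε_i = −1 for i > p. Let U ⊆ ℝ^d be open and ψ : U → ℝ smooth and nowhere vanishing, and set R^l_{ijk} = δ_{il}(∂_j∂_kψ)/ψ − δ_{jl}(∂_i∂_kψ)/ψ (the curvature coefficients of the incompressible projectively flattened connection of potential ψ). Then the conditions [for all i,j,k: R^k_{ijk} = 0, and for all i,j and all k ≠ l: ε_k R^l_{ijk} + ε_l R^k_{ijl} = 0] hold on U if and only if [∂_i∂_j ψ = 0 on U for all i ≠ j, and there exists a smooth function f : U → ℝ with ∂_i∂_i ψ = ε_i f on U for every i]. -/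
/-- The second partial derivative `∂_j ∂_k f`. -/
noncomputable def sder {d : ℕ} (f : (Fin d → ℝ) → ℝ) (j k : Fin d) (x : Fin d → ℝ) : ℝ :=
  fderiv ℝ (fun y => fderiv ℝ f y (Pi.single k 1)) x (Pi.single j 1)

/-- The curvature coefficients `R^l_{ijk} = δ_{il}(∂_j∂_kψ)/ψ − δ_{jl}(∂_i∂_kψ)/ψ` of
the incompressible projectively flattened connection of potential `ψ`. -/
noncomputable def curvRpot {d : ℕ} (ψ : (Fin d → ℝ) → ℝ) (i j k l : Fin d)
    (x : Fin d → ℝ) : ℝ :=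
  (if i = l then sder ψ j k x / ψ x else 0) - (if j = l then sder ψ i k x / ψ x else 0)

/-- The sign `ε_i` of the standard quadratic form of signature `(p, d−p)`. -/
def eps (d p : ℕ) (i : Fin d) : ℝ := if (i : ℕ) < p then 1 else -1

lemma eps_sq (d p : ℕ) (i : Fin d) : eps d p i * eps d p i = 1 := by
  unfold eps; split_ifs <;> norm_num

lemma eps_ne (d p : ℕ) (i : Fin d) : eps d p i ≠ 0 := by
  unfold eps; split_ifs <;> norm_num

lemma sder_smooth {d : ℕ} {U : Set (Fin d → ℝ)} (hU : IsOpen U)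
    {ψ : (Fin d → ℝ) → ℝ} (hψ : ContDiffOn ℝ (⊤ : ℕ∞) ψ U) (j k : Fin d) :
    ContDiffOn ℝ (⊤ : ℕ∞) (fun x => sder ψ j k x) U := by
  have h1 : ContDiffOn ℝ (⊤ : ℕ∞) (fun y => fderiv ℝ ψ y) U :=
    hψ.fderiv_of_isOpen hU (by exact_mod_cast le_top)
  have h2 : ContDiffOn ℝ (⊤ : ℕ∞) (fun y => fderiv ℝ ψ y (Pi.single k 1)) U :=
    h1.clm_apply contDiffOn_const
  exact (h2.fderiv_of_isOpen hU (by exact_mod_cast le_top)).clm_apply contDiffOn_const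


/-- The first-order infinitesimal holonomies of the incompressible projectively
flattened connection of potential `ψ` are infinitesimal isometries of the standard
pseudo-Euclidean structure of signature `(p, d−p)` (i.e. `R^k_{ijk} = 0` and
`ε_k R^l_{ijk} + ε_l R^k_{ijl} = 0` for `k ≠ l`) iff `∂_i∂_j ψ = 0` for `i ≠ j` and
there is a smooth `f` with `∂_i∂_i ψ = ε_i f` for every `i`. -/
theorem stmt10 (d p : ℕ) (hd : 2 ≤ d) (hp : p ≤ d)
    (U : Set (Fin d → ℝ)) (hU : IsOpen U)
    (ψ : (Fin d → ℝ) → ℝ) (hψ : ContDiffOn ℝ (⊤ : ℕ∞) ψ U)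
    (hψ0 : ∀ x ∈ U, ψ x ≠ 0) :
    ((∀ x ∈ U, ∀ i j k : Fin d, curvRpot ψ i j k k x = 0) ∧
      (∀ x ∈ U, ∀ i j k l : Fin d, k ≠ l →
        eps d p k * curvRpot ψ i j k l x + eps d p l * curvRpot ψ i j l k x = 0)) ↔
    ((∀ x ∈ U, ∀ i j : Fin d, i ≠ j → sder ψ i j x = 0) ∧
      ∃ f : (Fin d → ℝ) → ℝ, ContDiffOn ℝ (⊤ : ℕ∞) f U ∧
        ∀ i : Fin d, ∀ x ∈ U, sder ψ i i x = eps d p i * f x) := by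
  constructor
  · rintro ⟨hA, hB⟩
    have hoff : ∀ x ∈ U, ∀ i j : Fin d, i ≠ j → sder ψ i j x = 0 := by
      intro x hx i j hij
      have h := hA x hx j i j
      simp only [curvRpot, if_pos rfl, if_neg hij, sub_zero] at h
      rcases div_eq_zero_iff.1 h with h' | h'
      · exact h'
      · exact absurd h' (hψ0 x hx)
    have hdiag : ∀ x ∈ U, ∀ k l : Fin d,
        eps d p k * sder ψ k k x = eps d p l * sder ψ l l x := by
      intro x hx k l
      by_cases hkl : k = l
      · rw [hkl]
      · have h := hB x hx l k k l hkl
        have hlk : l ≠ k := fun h' => hkl h'.symm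
        have hψx : ψ x ≠ 0 := hψ0 x hx
        simp only [curvRpot, if_pos rfl, if_neg hkl, if_neg hlk, sub_zero, zero_sub, ↓reduceIte,
          mul_neg] at h
        field_simp at h
        linarith
    refine ⟨hoff, fun x => eps d p ⟨0, by omega⟩ * sder ψ ⟨0, by omega⟩ ⟨0, by omega⟩ x,
      contDiffOn_const.mul (sder_smooth hU hψ _ _), fun i x hx => ?_⟩
    have h := hdiag x hx ⟨0, by omega⟩ i
    calc sder ψ i i x = eps d p i * (eps d p i * sder ψ i i x) := by
          rw [← mul_assoc, eps_sq, one_mul]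
      _ = eps d p i * (eps d p ⟨0, by omega⟩ * sder ψ ⟨0, by omega⟩ ⟨0, by omega⟩ x) := by
          rw [h]
  · rintro ⟨hoff, f, hf, hdiag⟩
    have e2 : ∀ m : Fin d, eps d p m ^ 2 = 1 := fun m => by rw [sq, eps_sq]
    have hS : ∀ x ∈ U, ∀ a b : Fin d,
        sder ψ a b x = if a = b then eps d p a * f x else 0 := by
      intro x hx a b
      by_cases hab : a = b
      · subst hab; simp [hdiag a x hx]
      · simp [hab, hoff x hx a b hab]
    constructor
    · intro x hx i j k
      by_cases hik : i = k <;> by_cases hjk : j = k <;>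
        simp [curvRpot, hik, hjk, hS x hx]
    · intro x hx i j k l hkl
      have hlk : l ≠ k := fun h' => hkl h'.symm
      have hψx : ψ x ≠ 0 := hψ0 x hx
      simp only [curvRpot, hS x hx]
      by_cases hil : i = l <;> by_cases hjl : j = l <;>
        by_cases hik : i = k <;> by_cases hjk : j = k <;>
        simp_all <;> field_simp <;>
        (rcases e2 k with h1 | h1 <;> rcases e2 l with h2 | h2 <;> norm_num [h1, h2])
end

section
/- Let d ≥ 2, 0 ≤ p ≤ d, with ε_i = 1 for i ≤ p and ε_i = −1 for i > p, bilinear form x·y = Σ_i ε_i x_i y_i and q(x) = x·x on ℝ^d, and λ ∈ ℝ. Let e ∈ ℝ^d with q(e) ∈ {−1, 1}, set ψ(x) = q(x) + λ, and let I ⊆ (0,∞) be an interval with t₀ ∈ I such that ψ(t·e) = λ + t² q(e) ≠ 0 for all t ∈ I. Let γ(t) = t·e and let c ∈ ℝ and w ∈ ℝ^d with w·e = 0. Then the function v(t) = (ψ(t e)/ψ(t₀ e))² · c e + (ψ(t e)/ψ(t₀ e)) · w is the unique solution on I of the parallel-transport equation v'(t) = (2/ψ(γ(t))) · ( (γ(t)·γ'(t))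 v(t) + (γ(t)·v(t)) γ'(t) ) with initial value v(t₀) = c e + w. In particular, in an orthonormal basis whose first vector is e, the parallel transport along γ from time t₀ to time t₁ is the diagonal matrix Diag(Λ², Λ, …, Λ) with Λ = ψ(γ(t₁))/ψ(γ(t₀)). -/
def bform (d p : ℕ) (x y : Fin d → ℝ) : ℝ := ∑ i, eps d p i * x i * y i
def qf (d p : ℕ) (x : Fin d → ℝ) : ℝ := ∑ i, eps d p i * x i ^ 2

lemma bform_comm (d p : ℕ) (x y : Fin d → ℝ) : bform d p x y = bform d p y x :=
  Finset.sum_congr rfl fun i _ => by ring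

lemma bform_smul_left (d p : ℕ) (t : ℝ) (x y : Fin d → ℝ) :
    bform d p (t • x) y = t * bform d p x y := by
  unfold bform; rw [Finset.mul_sum]
  exact Finset.sum_congr rfl fun i _ => by simp [Pi.smul_apply, smul_eq_mul]; ring

lemma bform_smul_right (d p : ℕ) (t : ℝ) (x y : Fin d → ℝ) :
    bform d p x (t • y) = t * bform d p x y := by
  rw [bform_comm, bform_smul_left, bform_comm]

lemma bform_add_right (d p : ℕ) (x y z : Fin d → ℝ) :
    bform d p x (y + z) = bform d p x y + bform d p x z := by
  unfold bform; rw [← Finset.sum_add_distrib]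
  exact Finset.sum_congr rfl fun i _ => by simp [Pi.add_apply]; ring

lemma bform_self (d p : ℕ) (x : Fin d → ℝ) : bform d p x x = qf d p x :=
  Finset.sum_congr rfl fun i _ => by ring

lemma qf_smul (d p : ℕ) (t : ℝ) (x : Fin d → ℝ) :
    qf d p (t • x) = t ^ 2 * qf d p x := by
  unfold qf; rw [Finset.mul_sum]
  exact Finset.sum_congr rfl fun i _ => by simp [Pi.smul_apply, smul_eq_mul]; ring

lemma hasDerivWithinAt_bform (d p : ℕ) (x : Fin d → ℝ) {u : ℝ → Fin d → ℝ}
    {u' : Fin d → ℝ} {s : Set ℝ} {t : ℝ} (hu : HasDerivWithinAt u u' s t) :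
    HasDerivWithinAt (fun r => bform d p x (u r)) (bform d p x u') s t := by
  unfold bform
  apply HasDerivWithinAt.fun_sum
  intro i _
  simpa [mul_assoc] using (hasDerivWithinAt_pi.1 hu i).const_mul (eps d p i * x i)

lemma const_of_deriv_zero {G : Type*} [NormedAddCommGroup G] [NormedSpace ℝ G]
    {f : ℝ → G} {s : Set ℝ} (hs : Convex ℝ s)
    (hf : ∀ x ∈ s, HasDerivWithinAt f 0 s x) {x y : ℝ} (hx : x ∈ s) (hy : y ∈ s) :
    f y = f x := by
  have h := hs.norm_image_sub_le_of_norm_hasDerivWithin_le (C := 0) (f' := fun _ => (0:G))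
    hf (fun z hz => by simp) hx hy
  rw [zero_mul] at h
  rw [← sub_eq_zero]
  exact norm_le_zero_iff.1 h

noncomputable def rayPT (d p : ℕ) (lam : ℝ) (e w : Fin d → ℝ) (c t₀ t : ℝ) :
    Fin d → ℝ :=
  (((qf d p (t • e) + lam) / (qf d p (t₀ • e) + lam)) ^ 2 * c) • e
    + ((qf d p (t • e) + lam) / (qf d p (t₀ • e) + lam)) • w

set_option maxHeartbeats 1000000 in
/-- Along the ray `γ(t) = t·e` (with `q(e) = ±1`), the function
`v(t) = (ψ(te)/ψ(t₀e))²·c e + (ψ(te)/ψ(t₀e))·w` is the unique solution of the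
parallel-transport equation `v' = (2/ψ(γ))((γ·γ')v + (γ·v)γ')` with initial value
`v(t₀) = c e + w`, where `w ⟂ e`. -/
theorem stmt17 (d p : ℕ) (hd : 2 ≤ d) (hp : p ≤ d) (lam : ℝ)
    (e : Fin d → ℝ) (he : qf d p e = 1 ∨ qf d p e = -1)
    (I : Set ℝ) (hIpos : I ⊆ Set.Ioi (0 : ℝ)) (hIconv : Convex ℝ I)
    (t₀ : ℝ) (ht₀ : t₀ ∈ I)
    (hne : ∀ t ∈ I, qf d p (t • e) + lam ≠ 0)
    (c : ℝ) (w : Fin d → ℝ) (hw : bform d p w e = 0) :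
    rayPT d p lam e w c t₀ t₀ = c • e + w ∧
    (∀ t ∈ I, HasDerivWithinAt (rayPT d p lam e w c t₀)
      ((2 / (qf d p (t • e) + lam)) •
        (bform d p (t • e) e • rayPT d p lam e w c t₀ t
          + bform d p (t • e) (rayPT d p lam e w c t₀ t) • e)) I t) ∧
    (∀ u : ℝ → Fin d → ℝ, u t₀ = c • e + w →
      (∀ t ∈ I, HasDerivWithinAt u
        ((2 / (qf d p (t • e) + lam)) •
          (bform d p (t • e) e • u t + bform d p (t • e) (u t) • e)) I t) →
      ∀ t ∈ I, u t = rayPT d p lam e w c t₀ t) := by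
  set Q := qf d p e with hQdef
  have hψt₀ : qf d p (t₀ • e) + lam ≠ 0 := hne t₀ ht₀
  have hee : bform d p e e = Q := bform_self d p e
  have hew : bform d p e w = 0 := (bform_comm d p e w).trans hw
  have h1 : ∀ (r : ℝ) (s : Set ℝ),
      HasDerivWithinAt (fun x : ℝ => qf d p (x • e) + lam) (2 * r * Q) s r := by
    intro r s
    have heq : (fun x : ℝ => qf d p (x • e) + lam) = fun x => Q * x ^ 2 + lam := by
      funext x; rw [qf_smul]; ring
    rw [heq]
    have := (HasDerivAt.const_mul Q (hasDerivAt_pow 2 r)).add_const lam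
    refine HasDerivWithinAt.congr_deriv this.hasDerivWithinAt (Eq.symm ?_)
    push_cast
    ring
  refine ⟨?_, ?_, ?_⟩
  · unfold rayPT
    rw [div_self hψt₀]
    norm_num
  · intro t ht
    have hψt : qf d p (t • e) + lam ≠ 0 := hne t ht
    have hc2 : HasDerivWithinAt
        (fun r : ℝ => (qf d p (r • e) + lam) / (qf d p (t₀ • e) + lam))
        ((2 * t * Q) / (qf d p (t₀ • e) + lam)) I t := (h1 t I).div_const _
    have hder := (((hc2.pow 2).mul_const c).smul_const e).add (hc2.smul_const w)
    have hfun : rayPT d p lam e w c t₀ = fun r : ℝ =>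
        (((qf d p (r • e) + lam) / (qf d p (t₀ • e) + lam)) ^ 2 * c) • e
          + ((qf d p (r • e) + lam) / (qf d p (t₀ • e) + lam)) • w := rfl
    rw [hfun]
    refine HasDerivWithinAt.congr_deriv hder (Eq.symm ?_)
    simp only [bform_smul_left, bform_add_right, bform_smul_right, hee, hew,
      mul_zero, add_zero]
    funext i
    simp only [Pi.add_apply, Pi.smul_apply, smul_eq_mul]
    simp only [Pi.pow_apply, Pi.inv_apply, Nat.cast_ofNat, show (2:ℕ) - 1 = 1 from rfl, pow_one]
    field_simp
    ring
  · intro u hu0 hu' t ht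
    have hψt : qf d p (t • e) + lam ≠ 0 := hne t ht
    -- derivative of β r = bform e (u r)
    have hφd : ∀ r ∈ I, HasDerivWithinAt
        (fun s : ℝ => bform d p e (u s) * ((qf d p (s • e) + lam) ^ 2)⁻¹) 0 I r := by
      intro r hr
      have hψr := hne r hr
      have hβd := hasDerivWithinAt_bform d p e (hu' r hr)
      have hinv := ((h1 r I).pow 2).inv (pow_ne_zero 2 hψr)
      have h := hβd.mul hinv
      refine HasDerivWithinAt.congr_deriv h (Eq.symm ?_)
      simp only [bform_smul_right, bform_add_right, bform_smul_left, hee]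
      simp only [Pi.pow_apply, Pi.inv_apply, Nat.cast_ofNat, show (2:ℕ) - 1 = 1 from rfl, pow_one]
      field_simp
      ring
    have hβt₀ : bform d p e (u t₀) = c * Q := by
      rw [hu0, bform_add_right, bform_smul_right, hee, hew]; ring
    have hβ : ∀ r ∈ I, bform d p e (u r)
        = c * Q * (qf d p (r • e) + lam) ^ 2 / (qf d p (t₀ • e) + lam) ^ 2 := by
      intro r hr
      have h := const_of_deriv_zero hIconv hφd ht₀ hr
      rw [hβt₀] at h
      have hψr := hne r hr
      field_simp at h ⊢
      linarith [h]
    -- Z is constant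
    have hZd : ∀ r ∈ I, HasDerivWithinAt
        (fun s : ℝ => (qf d p (s • e) + lam)⁻¹ • u s
          - ((Q * (c * Q / (qf d p (t₀ • e) + lam) ^ 2)) * (qf d p (s • e) + lam)) • e)
        0 I r := by
      intro r hr
      have hψr := hne r hr
      have hb := ((h1 r I).inv hψr).smul (hu' r hr)
      have hc := ((h1 r I).const_mul
        (Q * (c * Q / (qf d p (t₀ • e) + lam) ^ 2))).smul_const e
      have h := hb.sub hc
      refine HasDerivWithinAt.congr_deriv h (Eq.symm ?_)
      simp only [bform_smul_left, hee, hβ r hr]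
      funext i
      simp only [Pi.add_apply, Pi.sub_apply, Pi.smul_apply, Pi.zero_apply, smul_eq_mul]
      simp only [Pi.inv_apply]
      rcases he with h' | h' <;> rw [h'] <;> field_simp <;> ring
    have hZ := const_of_deriv_zero hIconv hZd ht₀ ht
    funext i
    have hzi := congrFun hZ i
    simp only [Pi.sub_apply, Pi.smul_apply, Pi.add_apply, smul_eq_mul, hu0] at hzi
    unfold rayPT
    simp only [Pi.add_apply, Pi.smul_apply, smul_eq_mul]
    rcases he with h' | h' <;>
      rw [h'] at hzi <;> field_simp at hzi ⊢ <;>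
      linear_combination hzi
end
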